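/- The matrix C = (c_{i,j}) defined by c_{i,1} = 1/(i+1) for all i ≥ 1 and c_{i-1,j} = (j/i) c_{i,j-1} for all i, j > 1 is symmetric, i.e., c_{i,j} = c_{j,i} for all i, j ≥ 1. -/

import Mathlib

theorem closed_form (c : ℕ+ × ℕ+ → ℚ)
    (h1 : ∀ i : ℕ+, c (i, 1) = 1 / ((i : ℚ) + 1))
    (h2 : ∀ i j : ℕ+, 1 < i → 1 < j → c (i - 1, j) = ((j : ℚ) / (i : ℚ)) * c (i, j - 1)) :
    ∀ j i : ℕ+, c (i, j) = (Nat.factorial i * Nat.factorial j : ℚ) / Nat.factorial (i + j) := by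
  intro j
  induction j using PNat.recOn with
  | one =>
    intro i
    rw [h1 i]
    have : ((i : ℕ) + 1) = (i + 1 : ℕ+) := rfl
    have hfac : (Nat.factorial ((i : ℕ) + 1) : ℚ) = ((i : ℕ) + 1) * Nat.factorial i := by
      rw [Nat.factorial_succ]; push_cast; ring
    have h0 : (Nat.factorial (i : ℕ) : ℚ) ≠ 0 := by
      exact_mod_cast Nat.factorial_ne_zero _
    have h1' : ((i : ℚ) + 1) ≠ 0 := by positivity
    simp only [PNat.add_coe, PNat.one_coe, Nat.factorial_one, Nat.cast_one, mul_one]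
    rw [hfac]
    field_simp
  | succ j ih =>
    intro i
    have key := h2 (i + 1) (j + 1) (by exact lt_add_of_pos_left 1 i.pos)
      (by exact lt_add_of_pos_left 1 j.pos)
    rw [PNat.add_sub, PNat.add_sub] at key
    rw [key, ih (i + 1)]
    have hi : ((i : ℚ) + 1) ≠ 0 := by positivity
    have hfi : (Nat.factorial ((i : ℕ) + 1) : ℚ) = ((i : ℕ) + 1) * Nat.factorial i := by
      rw [Nat.factorial_succ]; push_cast; ring
    have hfj : (Nat.factorial ((j : ℕ) + 1) : ℚ) = ((j : ℕ) + 1) * Nat.factorial j := by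
      rw [Nat.factorial_succ]; push_cast; ring
    simp only [PNat.add_coe, PNat.one_coe]
    rw [show (i:ℕ)+1+(j:ℕ) = (i:ℕ)+((j:ℕ)+1) by omega]
    rw [hfi, hfj]
    have hden : (Nat.factorial ((i : ℕ) + ((j : ℕ) + 1)) : ℚ) ≠ 0 := by
      exact_mod_cast Nat.factorial_ne_zero _
    push_cast
    field_simp

/-- The matrix C defined by c_{i,1} = 1/(i+1) for i ≥ 1 and
c_{i-1,j} = (j/i) c_{i,j-1} for i, j > 1 is symmetric. -/
theorem stmt_0 (c : ℕ+ × ℕ+ → ℚ)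
    (h1 : ∀ i : ℕ+, c (i, 1) = 1 / ((i : ℚ) + 1))
    (h2 : ∀ i j : ℕ+, 1 < i → 1 < j → c (i - 1, j) = ((j : ℚ) / (i : ℚ)) * c (i, j - 1)) :
    ∀ i j : ℕ+, c (i, j) = c (j, i) := by
  intro i j
  rw [closed_form c h1 h2 j i, closed_form c h1 h2 i j]
  rw [add_comm (j:ℕ) (i:ℕ)]
  ring
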